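/- For Flynn's family f_t(x) = x^6 + 2x^5 + (2t+3)x^4 + 2x^3 + (t^2+1)x^2 + 2t(1-t)x + t^2 with t ∈ ℚ, the discriminant of f_t equals -4096·t^7·(9 - 104t + 432t^2 + 16t^3) up to the normalization D_t = u_0^{10}∏_{i<j}(α_i - α_j)^2; in particular, f_t is squarefree (and hence y^2 = f_t(x) defines a smooth genus-2 curve) if and only if t ≠ 0 and 9 - 104t + 432t^2 + 16t^3 ≠ 0. -/

import Mathlib

open Polynomial

noncomputable def flynn (t : ℚ) : Polynomial ℚ :=
  X ^ 6 + 2 * X ^ 5 + C (2 * t + 3) * X ^ 4 + 2 * X ^ 3 + C (t ^ 2 + 1) * X ^ 2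
    + C (2 * t * (1 - t)) * X + C (t ^ 2)

set_option maxHeartbeats 1000000000 in
lemma flynn_disc_main (t : ℚ) (α : Fin 6 → AlgebraicClosure ℚ)
    (hα : (flynn t).map (algebraMap ℚ (AlgebraicClosure ℚ)) = ∏ i, (X - C (α i))) :
    ∏ i : Fin 6, ∏ j ∈ Finset.univ.filter (fun j => i < j), (α i - α j) ^ 2
      = algebraMap ℚ (AlgebraicClosure ℚ)
          (-4096 * t ^ 7 * (9 - 104 * t + 432 * t ^ 2 + 16 * t ^ 3)) := by
  obtain ⟨u, hu⟩ : ∃ u, u = algebraMap ℚ (AlgebraicClosure ℚ) t := ⟨_, rfl⟩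
  rw [Fin.prod_univ_six] at hα
  have hmap : (flynn t).map (algebraMap ℚ (AlgebraicClosure ℚ))
      = X^6 + 2*X^5 + C (2*u+3) * X^4 + 2*X^3 + C (u^2+1) * X^2 + C (2*u-2*u^2) * X + C (u^2) := by
    have h1 : algebraMap ℚ (AlgebraicClosure ℚ) (2*t+3) = 2*u+3 := by
      rw [hu, map_add, map_mul, map_ofNat, map_ofNat]
    have h2 : algebraMap ℚ (AlgebraicClosure ℚ) (t^2+1) = u^2+1 := by
      rw [hu, map_add, map_pow, map_one]
    have h3 : algebraMap ℚ (AlgebraicClosure ℚ) (2*t*(1-t)) = 2*u-2*u^2 := by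
      rw [hu, map_mul, map_mul, map_sub, map_one, map_ofNat]; ring
    have h4 : algebraMap ℚ (AlgebraicClosure ℚ) (t^2) = u^2 := by rw [hu, map_pow]
    simp only [flynn, Polynomial.map_add, Polynomial.map_mul, Polynomial.map_pow,
      Polynomial.map_X, Polynomial.map_C, Polynomial.map_ofNat, h1, h2, h3, h4]
  rw [hmap] at hα
  have hev : ∀ x : AlgebraicClosure ℚ,
      (x - α 0)*(x - α 1)*(x - α 2)*(x - α 3)*(x - α 4)*(x - α 5)
      = x^6 + 2*x^5 + (2*u+3)*x^4 + 2*x^3 + (u^2+1)*x^2 + (2*u-2*u^2)*x + u^2 := by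
    intro x
    have h := congrArg (Polynomial.eval x) hα
    simp only [eval_add, eval_mul, eval_pow, eval_X, eval_C, eval_sub, eval_ofNat] at h
    rw [← h]
  have hder : ∀ x : AlgebraicClosure ℚ,
      eval x (derivative ((X - C (α 0))*(X - C (α 1))*(X - C (α 2))*(X - C (α 3))*(X - C (α 4))*(X - C (α 5))))
      = 6*x^5 + 10*x^4 + (8*u+12)*x^3 + 6*x^2 + (2*u^2+2)*x + (2*u-2*u^2) := by
    intro x
    rw [← hα]
    simp only [derivative_add, derivative_mul, derivative_pow, derivative_X, derivative_C,
      derivative_ofNat, eval_add, eval_mul, eval_pow, eval_X, eval_C, eval_sub, eval_ofNat,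
      eval_one, eval_zero]
    ring
  have hE1 : α 0 + α 1 + α 2 + α 3 + α 4 + α 5 = ((-2)) := by
    linear_combination ((1/12)) * hev (0 : AlgebraicClosure ℚ) + ((-1/12)) * hev (1 : AlgebraicClosure ℚ) + ((-1/24)) * hev (-1 : AlgebraicClosure ℚ) + ((1/24)) * hev (2 : AlgebraicClosure ℚ) + ((1/120)) * hev (-2 : AlgebraicClosure ℚ) + ((-1/120)) * hev (3 : AlgebraicClosure ℚ)
  have hE2 : α 0*α 1 + α 0*α 2 + α 0*α 3 + α 0*α 4 + α 0*α 5 + α 1*α 2 + α 1*α 3 + α 1*α 4 + α 1*α 5 + α 2*α 3 + α 2*α 4 + α 2*α 5 + α 3*α 4 + α 3*α 5 + α 4*α 5 = (3 + 2*u) := by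
    linear_combination ((1/4)) * hev (0 : AlgebraicClosure ℚ) + ((-1/6)) * hev (1 : AlgebraicClosure ℚ) + ((-1/6)) * hev (-1 : AlgebraicClosure ℚ) + ((1/24)) * hev (2 : AlgebraicClosure ℚ) + ((1/24)) * hev (-2 : AlgebraicClosure ℚ)
  have hE3 : α 0*α 1*α 2 + α 0*α 1*α 3 + α 0*α 1*α 4 + α 0*α 1*α 5 + α 0*α 2*α 3 + α 0*α 2*α 4 + α 0*α 2*α 5 + α 0*α 3*α 4 + α 0*α 3*α 5 + α 0*α 4*α 5 + α 1*α 2*α 3 + α 1*α 2*α 4 + α 1*α 2*α 5 + α 1*α 3*α 4 + α 1*α 3*α 5 + α 1*α 4*α 5 + α 2*α 3*α 4 + α 2*α 3*α 5 + α 2*α 4*α 5 + α 3*α 4*α 5 = ((-2)) := by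
    linear_combination ((-5/12)) * hev (0 : AlgebraicClosure ℚ) + ((7/12)) * hev (1 : AlgebraicClosure ℚ) + ((1/24)) * hev (-1 : AlgebraicClosure ℚ) + ((-7/24)) * hev (2 : AlgebraicClosure ℚ) + ((1/24)) * hev (-2 : AlgebraicClosure ℚ) + ((1/24)) * hev (3 : AlgebraicClosure ℚ)
  have hE4 : α 0*α 1*α 2*α 3 + α 0*α 1*α 2*α 4 + α 0*α 1*α 2*α 5 + α 0*α 1*α 3*α 4 + α 0*α 1*α 3*α 5 + α 0*α 1*α 4*α 5 + α 0*α 2*α 3*α 4 + α 0*α 2*α 3*α 5 + α 0*α 2*α 4*α 5 + α 0*α 3*α 4*α 5 + α 1*α 2*α 3*α 4 + α 1*α 2*α 3*α 5 + α 1*α 2*α 4*α 5 + α 1*α 3*α 4*α 5 + α 2*α 3*α 4*α 5 = (1 + 1*u^2) := by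
    linear_combination ((-5/4)) * hev (0 : AlgebraicClosure ℚ) + ((2/3)) * hev (1 : AlgebraicClosure ℚ) + ((2/3)) * hev (-1 : AlgebraicClosure ℚ) + ((-1/24)) * hev (2 : AlgebraicClosure ℚ) + ((-1/24)) * hev (-2 : AlgebraicClosure ℚ)
  have hE5 : α 0*α 1*α 2*α 3*α 4 + α 0*α 1*α 2*α 3*α 5 + α 0*α 1*α 2*α 4*α 5 + α 0*α 1*α 3*α 4*α 5 + α 0*α 2*α 3*α 4*α 5 + α 1*α 2*α 3*α 4*α 5 = ((-2)*u + 2*u^2) := by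
    linear_combination ((1/3)) * hev (0 : AlgebraicClosure ℚ) + ((-1)) * hev (1 : AlgebraicClosure ℚ) + ((1/2)) * hev (-1 : AlgebraicClosure ℚ) + ((1/4)) * hev (2 : AlgebraicClosure ℚ) + ((-1/20)) * hev (-2 : AlgebraicClosure ℚ) + ((-1/30)) * hev (3 : AlgebraicClosure ℚ)
  have hp1 : α 0 + α 1 + α 2 + α 3 + α 4 + α 5 = ((-2)) := hE1
  have hp2 : α 0^2 + α 1^2 + α 2^2 + α 3^2 + α 4^2 + α 5^2 = ((-2) + (-4)*u) := by
    linear_combination (1) * (α 0 + α 1 + α 2 + α 3 + α 4 + α 5) * hE1 + (1) * ((-2)) * hp1 + (-2) * hE2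
  have hp3 : α 0^3 + α 1^3 + α 2^3 + α 3^3 + α 4^3 + α 5^3 = (4 + 12*u) := by
    linear_combination (1) * (α 0^2 + α 1^2 + α 2^2 + α 3^2 + α 4^2 + α 5^2) * hE1 + (1) * ((-2)) * hp2 + (-1) * (α 0 + α 1 + α 2 + α 3 + α 4 + α 5) * hE2 + (-1) * (3 + 2*u) * hp1 + (3) * hE3
  have hp4 : α 0^4 + α 1^4 + α 2^4 + α 3^4 + α 4^4 + α 5^4 = ((-2) + (-8)*u + 4*u^2) := by
    linear_combination (1) * (α 0^3 + α 1^3 + α 2^3 + α 3^3 + α 4^3 + α 5^3) * hE1 + (1) * ((-2)) * hp3 + (-1) * (α 0^2 + α 1^2 + α 2^2 + α 3^2 + α 4^2 + α 5^2) * hE2 + (-1) * (3 + 2*u) * hp2 + (1) * (α 0 + α 1 + α 2 + α 3 + α 4 + α 5) * hE3 + (1) * ((-2)) * hp1 + (-4) * hE4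
  have hp5 : α 0^5 + α 1^5 + α 2^5 + α 3^5 + α 4^5 + α 5^5 = ((-2) + (-30)*u + (-20)*u^2) := by
    linear_combination (1) * (α 0^4 + α 1^4 + α 2^4 + α 3^4 + α 4^4 + α 5^4) * hE1 + (1) * ((-2)) * hp4 + (-1) * (α 0^3 + α 1^3 + α 2^3 + α 3^3 + α 4^3 + α 5^3) * hE2 + (-1) * (3 + 2*u) * hp3 + (1) * (α 0^2 + α 1^2 + α 2^2 + α 3^2 + α 4^2 + α 5^2) * hE3 + (1) * ((-2)) * hp2 + (-1) * (α 0 + α 1 + α 2 + α 3 + α 4 + α 5) * hE4 + (-1) * (1 + 1*u^2) * hp1 + (5) * hE5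
  have hF : ∀ x : AlgebraicClosure ℚ,
      (x - α 0)*(x - α 1)*(x - α 2)*(x - α 3)*(x - α 4)*(x - α 5) = 0 →
      x^6 + 2*x^5 + (2*u+3)*x^4 + 2*x^3 + (u^2+1)*x^2 + (2*u-2*u^2)*x + u^2 = 0 := by
    intro x hx
    linear_combination -hev x + hx
  have wkey2 : ∀ x w : AlgebraicClosure ℚ, w = 6*x^5 + 10*x^4 + (8*u+12)*x^3 + 6*x^2 + (2*u^2+2)*x + (2*u-2*u^2) → x^6 + 2*x^5 + (2*u+3)*x^4 + 2*x^3 + (u^2+1)*x^2 + (2*u-2*u^2)*x + u^2 = 0 →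
      w^2 = (((-16)*u^3) + ((-32)*u^2)*(x) + ((-16)*u + (-64)*u^2)*(x)^2 + ((-64)*u + (-32)*u^2)*(x)^3 + ((-112)*u)*(x)^4 + ((-96)*u)*(x)^5) := by
    intro x w hw hx
    linear_combination (w + (6*x^5 + 10*x^4 + (8*u+12)*x^3 + 6*x^2 + (2*u^2+2)*x + (2*u-2*u^2))) * hw + (((4 + 8*u + 4*u^2) + (16 + 16*u)*(x) + (40 + 24*u)*(x)^2 + (48)*(x)^3 + (36)*(x)^4)) * hx
  have wkey3 : ∀ x w : AlgebraicClosure ℚ, w = 6*x^5 + 10*x^4 + (8*u+12)*x^3 + 6*x^2 + (2*u^2+2)*x + (2*u-2*u^2) → x^6 + 2*x^5 + (2*u+3)*x^4 + 2*x^3 + (u^2+1)*x^2 + (2*u-2*u^2)*x + u^2 = 0 →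
      w^3 = ((96*u^3 + 288*u^4 + 288*u^5) + (192*u^2 + 480*u^3 + 960*u^4 + (-544)*u^5)*(x) + (96*u + 480*u^2 + 1920*u^3 + (-1856)*u^4 + 256*u^5)*(x)^2 + (288*u + 1152*u^2 + 640*u^3 + 1216*u^4)*(x)^3 + (288*u + 2912*u^2 + 672*u^3 + 256*u^4)*(x)^4 + (192*u + 3136*u^2 + 1248*u^3)*(x)^5) := by
    intro x w hw hx
    linear_combination w * wkey2 x w hw hx + ((((-16)*u^3) + ((-32)*u^2)*(x) + ((-16)*u + (-64)*u^2)*(x)^2 + ((-64)*u + (-32)*u^2)*(x)^3 + ((-112)*u)*(x)^4 + ((-96)*u)*(x)^5)) * hw + ((((-96)*u + (-320)*u^2 + (-256)*u^3) + ((-128)*u + (-1024)*u^2)*(x) + (32*u + 192*u^2)*(x)^2 + ((-480)*u)*(x)^3 + ((-576)*u)*(x)^4)) * hx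
  have wkey4 : ∀ x w : AlgebraicClosure ℚ, w = 6*x^5 + 10*x^4 + (8*u+12)*x^3 + 6*x^2 + (2*u^2+2)*x + (2*u-2*u^2) → x^6 + 2*x^5 + (2*u+3)*x^4 + 2*x^3 + (u^2+1)*x^2 + (2*u-2*u^2)*x + u^2 = 0 →
      w^4 = (((-3840)*u^4 + (-3584)*u^5 + (-16128)*u^6) + ((-7680)*u^3 + (-7168)*u^4 + (-62464)*u^5 + 32768*u^6)*(x) + ((-3840)*u^2 + (-18944)*u^3 + (-70144)*u^4 + 86528*u^5 + (-16384)*u^6)*(x)^2 + ((-15360)*u^2 + (-26112)*u^3 + (-30720)*u^4 + (-61440)*u^5)*(x)^3 + ((-17664)*u^2 + (-81920)*u^3 + (-40704)*u^4 + (-20480)*u^5)*(x)^4 + ((-13824)*u^2 + (-113664)*u^3 + (-86016)*u^4)*(x)^5) := by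
    intro x w hw hx
    linear_combination w * wkey3 x w hw hx + (((96*u^3 + 288*u^4 + 288*u^5) + (192*u^2 + 480*u^3 + 960*u^4 + (-544)*u^5)*(x) + (96*u + 480*u^2 + 1920*u^3 + (-1856)*u^4 + 256*u^5)*(x)^2 + (288*u + 1152*u^2 + 640*u^3 + 1216*u^4)*(x)^3 + (288*u + 2912*u^2 + 672*u^3 + 256*u^4)*(x)^4 + (192*u + 3136*u^2 + 1248*u^3)*(x)^5)) * hw + (((4032*u^2 + 3968*u^3 + 16128*u^4 + (-576)*u^5) + (192*u + 8448*u^2 + 39872*u^3 + (-1792)*u^4 + 512*u^5)*(x) + (768*u + (-5952)*u^2 + (-12544)*u^3 + 1792*u^4)*(x)^2 + (1344*u + 11200*u^2 + 1536*u^3 + 1536*u^4)*(x)^3 + (1152*u + 18816*u^2 + 7488*u^3)*(x)^4)) * hx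
  have wkey5 : ∀ x w : AlgebraicClosure ℚ, w = 6*x^5 + 10*x^4 + (8*u+12)*x^3 + 6*x^2 + (2*u^2+2)*x + (2*u-2*u^2) → x^6 + 2*x^5 + (2*u+3)*x^4 + 2*x^3 + (u^2+1)*x^2 + (2*u-2*u^2)*x + u^2 = 0 →
      w^5 = ((4608*u^4 + 88576*u^5 + (-142848)*u^6 + 613888*u^7 + 146944*u^8) + (9216*u^3 + 172544*u^4 + (-37888)*u^5 + 3072512*u^6 + (-678912)*u^7 + (-310784)*u^8)*(x) + (4608*u^2 + 97792*u^3 + 693248*u^4 + 2603008*u^5 + (-3228672)*u^6 + (-48128)*u^7 + 180224*u^8)*(x)^2 + (13824*u^2 + 583680*u^3 + 565760*u^4 + 1385472*u^5 + 2731008*u^6 + 508928*u^7 + (-16384)*u^8)*(x)^3 + (13824*u^2 + 766464*u^3 + 2211840*u^4 + 1578496*u^5 + 1361408*u^6 + 147456*u^7)*(x)^4 + (9216*u^2 + 727040*u^3 + 4295680*u^4 + 4489216*u^5 + 508416*u^6 + (-16384)*u^7)*(x)^5) := by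
    intro x w hw hx
    linear_combination w * wkey4 x w hw hx + ((((-3840)*u^4 + (-3584)*u^5 + (-16128)*u^6) + ((-7680)*u^3 + (-7168)*u^4 + (-62464)*u^5 + 32768*u^6)*(x) + ((-3840)*u^2 + (-18944)*u^3 + (-70144)*u^4 + 86528*u^5 + (-16384)*u^6)*(x)^2 + ((-15360)*u^2 + (-26112)*u^3 + (-30720)*u^4 + (-61440)*u^5)*(x)^3 + ((-17664)*u^2 + (-81920)*u^3 + (-40704)*u^4 + (-20480)*u^5)*(x)^4 + ((-13824)*u^2 + (-113664)*u^3 + (-86016)*u^4)*(x)^5)) * hw + ((((-4608)*u^2 + (-96256)*u^3 + 143360*u^4 + (-638976)*u^5 + (-114688)*u^6) + ((-12288)*u^2 + (-447488)*u^3 + (-1658368)*u^4 + (-186368)*u^5 + (-16384)*u^6)*(x) + ((-29184)*u^2 + 289792*u^3 + 523776*u^4 + 16384*u^5)*(x)^2 + ((-78336)*u^2 + (-264192)*u^3 + (-72192)*u^4 + (-122880)*u^5)*(x)^3 + ((-82944)*u^2 + (-681984)*u^3 + (-516096)*u^4)*(x)^4)) * hx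
  have wkey6 : ∀ x w : AlgebraicClosure ℚ, w = 6*x^5 + 10*x^4 + (8*u+12)*x^3 + 6*x^2 + (2*u^2+2)*x + (2*u-2*u^2) → x^6 + 2*x^5 + (2*u+3)*x^4 + 2*x^3 + (u^2+1)*x^2 + (2*u-2*u^2)*x + u^2 = 0 →
      w^6 = (((-331776)*u^5 + 311296*u^6 + 17584128*u^7 + (-17014784)*u^8 + (-15863808)*u^9) + ((-663552)*u^4 + 622592*u^5 + 13664256*u^6 + (-135872512)*u^7 + (-22331392)*u^8 + 33423360*u^9)*(x) + ((-331776)*u^3 + (-1015808)*u^4 + (-22298624)*u^5 + (-94208000)*u^6 + 111337472*u^7 + 45932544*u^8 + (-19267584)*u^9)*(x)^2 + ((-1327104)*u^3 + (-18489344)*u^4 + (-5996544)*u^5 + (-54263808)*u^6 + (-121126912)*u^7 + (-46792704)*u^8 + 1703936*u^9)*(x)^3 + ((-1437696)*u^3 + (-27852800)*u^4 + (-48914432)*u^5 + (-42024960)*u^6 + (-74190848)*u^7 + (-18481152)*u^8)*(x)^4 + ((-1105920)*u^3 + (-33914880)*u^4 + (-165216256)*u^5 + (-211517440)*u^6 +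 (-57016320)*u^7 + 1966080*u^8)*(x)^5) := by
    intro x w hw hx
    linear_combination w * wkey5 x w hw hx + (((4608*u^4 + 88576*u^5 + (-142848)*u^6 + 613888*u^7 + 146944*u^8) + (9216*u^3 + 172544*u^4 + (-37888)*u^5 + 3072512*u^6 + (-678912)*u^7 + (-310784)*u^8)*(x) + (4608*u^2 + 97792*u^3 + 693248*u^4 + 2603008*u^5 + (-3228672)*u^6 + (-48128)*u^7 + 180224*u^8)*(x)^2 + (13824*u^2 + 583680*u^3 + 565760*u^4 + 1385472*u^5 + 2731008*u^6 + 508928*u^7 + (-16384)*u^8)*(x)^3 + (13824*u^2 + 766464*u^3 + 2211840*u^4 + 1578496*u^5 + 1361408*u^6 + 147456*u^7)*(x)^4 + (9216*u^2 + 727040*u^3 + 4295680*u^4 + 4489216*u^5 + 508416*u^6 + (-16384)*u^7)*(x)^5)) * hw + (((340992*u^3 + (-143360)*u^4 + (-18046976)*u^5 + 18528256*u^6 + 14929920*u^7 + (-293888)*u^8) + (9216*u^2 + 849920*u^3 + 21445632*u^4 + 70347776*u^5 + 22033408*u^6 + (-1011712)*u^7 + 327680*u^8)*(x) + (36864*u^2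 + 478208*u^3 + (-12528640)*u^4 + (-21005312)*u^5 + (-5310464)*u^6 + 757760*u^7 + (-32768)*u^8)*(x)^2 + (64512*u^2 + 3144704*u^3 + 4679680*u^4 + 492544*u^5 + 7151616*u^6 + 917504*u^7)*(x)^3 + (55296*u^2 + 4362240*u^3 + 25774080*u^4 + 26935296*u^5 + 3050496*u^6 + (-98304)*u^7)*(x)^4)) * hx
  have hF0 : (α 0)^6 + 2*(α 0)^5 + (2*u+3)*(α 0)^4 + 2*(α 0)^3 + (u^2+1)*(α 0)^2 + (2*u-2*u^2)*(α 0) + u^2 = 0 := by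
    apply hF (α 0)
    ring
  have hF1 : (α 1)^6 + 2*(α 1)^5 + (2*u+3)*(α 1)^4 + 2*(α 1)^3 + (u^2+1)*(α 1)^2 + (2*u-2*u^2)*(α 1) + u^2 = 0 := by
    apply hF (α 1)
    ring
  have hF2 : (α 2)^6 + 2*(α 2)^5 + (2*u+3)*(α 2)^4 + 2*(α 2)^3 + (u^2+1)*(α 2)^2 + (2*u-2*u^2)*(α 2) + u^2 = 0 := by
    apply hF (α 2)
    ring
  have hF3 : (α 3)^6 + 2*(α 3)^5 + (2*u+3)*(α 3)^4 + 2*(α 3)^3 + (u^2+1)*(α 3)^2 + (2*u-2*u^2)*(α 3) + u^2 = 0 := by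
    apply hF (α 3)
    ring
  have hF4 : (α 4)^6 + 2*(α 4)^5 + (2*u+3)*(α 4)^4 + 2*(α 4)^3 + (u^2+1)*(α 4)^2 + (2*u-2*u^2)*(α 4) + u^2 = 0 := by
    apply hF (α 4)
    ring
  have hF5 : (α 5)^6 + 2*(α 5)^5 + (2*u+3)*(α 5)^4 + 2*(α 5)^3 + (u^2+1)*(α 5)^2 + (2*u-2*u^2)*(α 5) + u^2 = 0 := by
    apply hF (α 5)
    ring
  have hq0 : 6*(α 0)^5 + 10*(α 0)^4 + (8*u+12)*(α 0)^3 + 6*(α 0)^2 + (2*u^2+2)*(α 0) + (2*u-2*u^2) = (α 0 - α 1)*(α 0 - α 2)*(α 0 - α 3)*(α 0 - α 4)*(α 0 - α 5) := by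
    rw [← hder (α 0)]
    simp only [derivative_mul, derivative_sub, derivative_X, derivative_C, derivative_one,
      sub_zero, mul_one, one_mul, eval_add, eval_mul, eval_sub, eval_X, eval_C, eval_one]
    ring
  have hq1 : 6*(α 1)^5 + 10*(α 1)^4 + (8*u+12)*(α 1)^3 + 6*(α 1)^2 + (2*u^2+2)*(α 1) + (2*u-2*u^2) = -((α 0 - α 1)*(α 1 - α 2)*(α 1 - α 3)*(α 1 - α 4)*(α 1 - α 5)) := by
    rw [← hder (α 1)]
    simp only [derivative_mul, derivative_sub, derivative_X, derivative_C, derivative_one,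
      sub_zero, mul_one, one_mul, eval_add, eval_mul, eval_sub, eval_X, eval_C, eval_one]
    ring
  have hq2 : 6*(α 2)^5 + 10*(α 2)^4 + (8*u+12)*(α 2)^3 + 6*(α 2)^2 + (2*u^2+2)*(α 2) + (2*u-2*u^2) = (α 0 - α 2)*(α 1 - α 2)*(α 2 - α 3)*(α 2 - α 4)*(α 2 - α 5) := by
    rw [← hder (α 2)]
    simp only [derivative_mul, derivative_sub, derivative_X, derivative_C, derivative_one,
      sub_zero, mul_one, one_mul, eval_add, eval_mul, eval_sub, eval_X, eval_C, eval_one]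
    ring
  have hq3 : 6*(α 3)^5 + 10*(α 3)^4 + (8*u+12)*(α 3)^3 + 6*(α 3)^2 + (2*u^2+2)*(α 3) + (2*u-2*u^2) = -((α 0 - α 3)*(α 1 - α 3)*(α 2 - α 3)*(α 3 - α 4)*(α 3 - α 5)) := by
    rw [← hder (α 3)]
    simp only [derivative_mul, derivative_sub, derivative_X, derivative_C, derivative_one,
      sub_zero, mul_one, one_mul, eval_add, eval_mul, eval_sub, eval_X, eval_C, eval_one]
    ring
  have hq4 : 6*(α 4)^5 + 10*(α 4)^4 + (8*u+12)*(α 4)^3 + 6*(α 4)^2 + (2*u^2+2)*(α 4) + (2*u-2*u^2) = (α 0 - α 4)*(α 1 - α 4)*(α 2 - α 4)*(α 3 - α 4)*(α 4 - α 5) := by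
    rw [← hder (α 4)]
    simp only [derivative_mul, derivative_sub, derivative_X, derivative_C, derivative_one,
      sub_zero, mul_one, one_mul, eval_add, eval_mul, eval_sub, eval_X, eval_C, eval_one]
    ring
  have hq5 : 6*(α 5)^5 + 10*(α 5)^4 + (8*u+12)*(α 5)^3 + 6*(α 5)^2 + (2*u^2+2)*(α 5) + (2*u-2*u^2) = -((α 0 - α 5)*(α 1 - α 5)*(α 2 - α 5)*(α 3 - α 5)*(α 4 - α 5)) := by
    rw [← hder (α 5)]
    simp only [derivative_mul, derivative_sub, derivative_X, derivative_C, derivative_one,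
      sub_zero, mul_one, one_mul, eval_add, eval_mul, eval_sub, eval_X, eval_C, eval_one]
    ring
  obtain ⟨w0, hw0⟩ : ∃ w, w = 6*(α 0)^5 + 10*(α 0)^4 + (8*u+12)*(α 0)^3 + 6*(α 0)^2 + (2*u^2+2)*(α 0) + (2*u-2*u^2) := ⟨_, rfl⟩
  obtain ⟨w1, hw1⟩ : ∃ w, w = 6*(α 1)^5 + 10*(α 1)^4 + (8*u+12)*(α 1)^3 + 6*(α 1)^2 + (2*u^2+2)*(α 1) + (2*u-2*u^2) := ⟨_, rfl⟩
  obtain ⟨w2, hw2⟩ : ∃ w, w = 6*(α 2)^5 + 10*(α 2)^4 + (8*u+12)*(α 2)^3 + 6*(α 2)^2 + (2*u^2+2)*(α 2) + (2*u-2*u^2) := ⟨_, rfl⟩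
  obtain ⟨w3, hw3⟩ : ∃ w, w = 6*(α 3)^5 + 10*(α 3)^4 + (8*u+12)*(α 3)^3 + 6*(α 3)^2 + (2*u^2+2)*(α 3) + (2*u-2*u^2) := ⟨_, rfl⟩
  obtain ⟨w4, hw4⟩ : ∃ w, w = 6*(α 4)^5 + 10*(α 4)^4 + (8*u+12)*(α 4)^3 + 6*(α 4)^2 + (2*u^2+2)*(α 4) + (2*u-2*u^2) := ⟨_, rfl⟩
  obtain ⟨w5, hw5⟩ : ∃ w, w = 6*(α 5)^5 + 10*(α 5)^4 + (8*u+12)*(α 5)^3 + 6*(α 5)^2 + (2*u^2+2)*(α 5) + (2*u-2*u^2) := ⟨_, rfl⟩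
  have hP1 : w0 + w1 + w2 + w3 + w4 + w5 = ((-96)*u) := by
    linear_combination hw0 + hw1 + hw2 + hw3 + hw4 + hw5 + (2 + 2*u^2) * hp1 + (6) * hp2 + (12 + 8*u) * hp3 + (10) * hp4 + (6) * hp5
  have hP2 : w0^2 + w1^2 + w2^2 + w3^2 + w4^2 + w5^2 = (192*u + 3136*u^2 + 1248*u^3) := by
    linear_combination wkey2 (α 0) w0 hw0 hF0 + wkey2 (α 1) w1 hw1 hF1 + wkey2 (α 2) w2 hw2 hF2 + wkey2 (α 3) w3 hw3 hF3 + wkey2 (α 4) w4 hw4 hF4 + wkey2 (α 5) w5 hw5 hF5 + ((-32)*u^2) * hp1 + ((-16)*u + (-64)*u^2) * hp2 + ((-64)*u + (-32)*u^2) * hp3 + ((-112)*u) * hp4 + ((-96)*u) * hp5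
  have hP3 : w0^3 + w1^3 + w2^3 + w3^3 + w4^3 + w5^3 = ((-13824)*u^2 + (-113664)*u^3 + (-86016)*u^4) := by
    linear_combination wkey3 (α 0) w0 hw0 hF0 + wkey3 (α 1) w1 hw1 hF1 + wkey3 (α 2) w2 hw2 hF2 + wkey3 (α 3) w3 hw3 hF3 + wkey3 (α 4) w4 hw4 hF4 + wkey3 (α 5) w5 hw5 hF5 + (192*u^2 + 480*u^3 + 960*u^4 + (-544)*u^5) * hp1 + (96*u + 480*u^2 + 1920*u^3 + (-1856)*u^4 + 256*u^5) * hp2 + (288*u + 1152*u^2 + 640*u^3 + 1216*u^4) * hp3 + (288*u + 2912*u^2 + 672*u^3 + 256*u^4) * hp4 + (192*u + 3136*u^2 + 1248*u^3) * hp5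
  have hP4 : w0^4 + w1^4 + w2^4 + w3^4 + w4^4 + w5^4 = (9216*u^2 + 727040*u^3 + 4295680*u^4 + 4489216*u^5 + 508416*u^6 + (-16384)*u^7) := by
    linear_combination wkey4 (α 0) w0 hw0 hF0 + wkey4 (α 1) w1 hw1 hF1 + wkey4 (α 2) w2 hw2 hF2 + wkey4 (α 3) w3 hw3 hF3 + wkey4 (α 4) w4 hw4 hF4 + wkey4 (α 5) w5 hw5 hF5 + ((-7680)*u^3 + (-7168)*u^4 + (-62464)*u^5 + 32768*u^6) * hp1 + ((-3840)*u^2 + (-18944)*u^3 + (-70144)*u^4 + 86528*u^5 + (-16384)*u^6) * hp2 + ((-15360)*u^2 + (-26112)*u^3 + (-30720)*u^4 + (-61440)*u^5) * hp3 + ((-17664)*u^2 + (-81920)*u^3 + (-40704)*u^4 + (-20480)*u^5) * hp4 + ((-13824)*u^2 + (-113664)*u^3 + (-86016)*u^4) * hp5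
  have hP5 : w0^5 + w1^5 + w2^5 + w3^5 + w4^5 + w5^5 = ((-1105920)*u^3 + (-33914880)*u^4 + (-165216256)*u^5 + (-211517440)*u^6 + (-57016320)*u^7 + 1966080*u^8) := by
    linear_combination wkey5 (α 0) w0 hw0 hF0 + wkey5 (α 1) w1 hw1 hF1 + wkey5 (α 2) w2 hw2 hF2 + wkey5 (α 3) w3 hw3 hF3 + wkey5 (α 4) w4 hw4 hF4 + wkey5 (α 5) w5 hw5 hF5 + (9216*u^3 + 172544*u^4 + (-37888)*u^5 + 3072512*u^6 + (-678912)*u^7 + (-310784)*u^8) * hp1 + (4608*u^2 + 97792*u^3 + 693248*u^4 + 2603008*u^5 + (-3228672)*u^6 + (-48128)*u^7 + 180224*u^8) * hp2 + (13824*u^2 + 583680*u^3 + 565760*u^4 + 1385472*u^5 + 2731008*u^6 + 508928*u^7 + (-16384)*u^8) * hp3 + (13824*u^2 + 766464*u^3 + 2211840*u^4 + 1578496*u^5 + 1361408*u^6 + 147456*u^7) * hp4 + (9216*u^2 + 727040*u^3 + 4295680*u^4 + 4489216*u^5 + 508416*u^6 + (-16384)*u^7) * hp5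
  have hP6 : w0^6 + w1^6 + w2^6 + w3^6 + w4^6 + w5^6 = (442368*u^3 + 83017728*u^4 + 1484464128*u^5 + 6384910336*u^6 + 9448538112*u^7 + 4163960832*u^8 + 70508544*u^9 + (-15728640)*u^10) := by
    linear_combination wkey6 (α 0) w0 hw0 hF0 + wkey6 (α 1) w1 hw1 hF1 + wkey6 (α 2) w2 hw2 hF2 + wkey6 (α 3) w3 hw3 hF3 + wkey6 (α 4) w4 hw4 hF4 + wkey6 (α 5) w5 hw5 hF5 + ((-663552)*u^4 + 622592*u^5 + 13664256*u^6 + (-135872512)*u^7 + (-22331392)*u^8 + 33423360*u^9) * hp1 + ((-331776)*u^3 + (-1015808)*u^4 + (-22298624)*u^5 + (-94208000)*u^6 + 111337472*u^7 + 45932544*u^8 + (-19267584)*u^9) * hp2 + ((-1327104)*u^3 + (-18489344)*u^4 + (-5996544)*u^5 + (-54263808)*u^6 + (-121126912)*u^7 + (-46792704)*u^8 + 1703936*u^9) * hp3 + ((-1437696)*u^3 + (-27852800)*u^4 + (-48914432)*u^5 + (-42024960)*u^6 + (-74190848)*u^7 + (-18481152)*u^8) * hp4 + ((-1105920)*u^3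 + (-33914880)*u^4 + (-165216256)*u^5 + (-211517440)*u^6 + (-57016320)*u^7 + 1966080*u^8) * hp5
  have hS1 := hP1
  have hS2 : w0*w1 + w0*w2 + w0*w3 + w0*w4 + w0*w5 + w1*w2 + w1*w3 + w1*w4 + w1*w5 + w2*w3 + w2*w4 + w2*w5 + w3*w4 + w3*w5 + w4*w5 = ((-96)*u + 3040*u^2 + (-624)*u^3) := by
    linear_combination ((1/2)) * (w0 + w1 + w2 + w3 + w4 + w5) * hP1 + ((1/2)) * ((-96)*u) * hS1 + ((-1/2)) * hP2
  have hS3 : w0*w1*w2 + w0*w1*w3 + w0*w1*w4 + w0*w1*w5 + w0*w2*w3 + w0*w2*w4 + w0*w2*w5 + w0*w3*w4 + w0*w3*w5 + w0*w4*w5 + w1*w2*w3 + w1*w2*w4 + w1*w2*w5 + w1*w3*w4 + w1*w3*w5 + w1*w4*w5 + w2*w3*w4 + w2*w3*w5 + w2*w4*w5 + w3*w4*w5 = (4608*u^2 + (-34816)*u^3 + 31232*u^4) := by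
    linear_combination ((1/3)) * (w0*w1 + w0*w2 + w0*w3 + w0*w4 + w0*w5 + w1*w2 + w1*w3 + w1*w4 + w1*w5 + w2*w3 + w2*w4 + w2*w5 + w3*w4 + w3*w5 + w4*w5) * hP1 + ((1/3)) * ((-96)*u) * hS2 + ((-1/3)) * (w0 + w1 + w2 + w3 + w4 + w5) * hP2 + ((-1/3)) * (192*u + 3136*u^2 + 1248*u^3) * hS1 + ((1/3)) * hP3
  have hS4 : w0*w1*w2*w3 + w0*w1*w2*w4 + w0*w1*w2*w5 + w0*w1*w3*w4 + w0*w1*w3*w5 + w0*w1*w4*w5 + w0*w2*w3*w4 + w0*w2*w3*w5 + w0*w2*w4*w5 + w0*w3*w4*w5 + w1*w2*w3*w4 + w1*w2*w3*w5 + w1*w2*w4*w5 + w1*w3*w4*w5 + w2*w3*w4*w5 = (2304*u^2 + (-31232)*u^3 + 166144*u^4 + (-266752)*u^5 + 67584*u^6 + 4096*u^7) := by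
    linear_combination ((1/4)) * (w0*w1*w2 + w0*w1*w3 + w0*w1*w4 + w0*w1*w5 + w0*w2*w3 + w0*w2*w4 + w0*w2*w5 + w0*w3*w4 + w0*w3*w5 + w0*w4*w5 + w1*w2*w3 + w1*w2*w4 + w1*w2*w5 + w1*w3*w4 + w1*w3*w5 + w1*w4*w5 + w2*w3*w4 + w2*w3*w5 + w2*w4*w5 + w3*w4*w5) * hP1 + ((1/4)) * ((-96)*u) * hS3 + ((-1/4)) * (w0*w1 + w0*w2 + w0*w3 + w0*w4 + w0*w5 + w1*w2 + w1*w3 + w1*w4 + w1*w5 + w2*w3 + w2*w4 + w2*w5 + w3*w4 + w3*w5 + w4*w5) * hP2 + ((-1/4)) * (192*u + 3136*u^2 + 1248*u^3) * hS2 + ((1/4)) * (w0 + w1 + w2 + w3 + w4 + w5) * hP3 + ((1/4)) * ((-13824)*u^2 + (-113664)*u^3 + (-86016)*u^4) * hS1 + ((-1/4)) * hP4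
  have hS5 : w0*w1*w2*w3*w4 + w0*w1*w2*w3*w5 + w0*w1*w2*w4*w5 + w0*w1*w3*w4*w5 + w0*w2*w3*w4*w5 + w1*w2*w3*w4*w5 = 0 := by
    linear_combination ((1/5)) * (w0*w1*w2*w3 + w0*w1*w2*w4 + w0*w1*w2*w5 + w0*w1*w3*w4 + w0*w1*w3*w5 + w0*w1*w4*w5 + w0*w2*w3*w4 + w0*w2*w3*w5 + w0*w2*w4*w5 + w0*w3*w4*w5 + w1*w2*w3*w4 + w1*w2*w3*w5 + w1*w2*w4*w5 + w1*w3*w4*w5 + w2*w3*w4*w5) * hP1 + ((1/5)) * ((-96)*u) * hS4 + ((-1/5)) * (w0*w1*w2 + w0*w1*w3 + w0*w1*w4 + w0*w1*w5 + w0*w2*w3 + w0*w2*w4 + w0*w2*w5 + w0*w3*w4 + w0*w3*w5 + w0*w4*w5 + w1*w2*w3 + w1*w2*w4 + w1*w2*w5 + w1*w3*w4 + w1*w3*w5 + w1*w4*w5 + w2*w3*w4 + w2*w3*w5 + w2*w4*w5 + w3*w4*w5) * hP2 + ((-1/5)) * (192*u + 3136*u^2 + 1248*u^3) * hS3 + ((1/5))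 * (w0*w1 + w0*w2 + w0*w3 + w0*w4 + w0*w5 + w1*w2 + w1*w3 + w1*w4 + w1*w5 + w2*w3 + w2*w4 + w2*w5 + w3*w4 + w3*w5 + w4*w5) * hP3 + ((1/5)) * ((-13824)*u^2 + (-113664)*u^3 + (-86016)*u^4) * hS2 + ((-1/5)) * (w0 + w1 + w2 + w3 + w4 + w5) * hP4 + ((-1/5)) * (9216*u^2 + 727040*u^3 + 4295680*u^4 + 4489216*u^5 + 508416*u^6 + (-16384)*u^7) * hS1 + ((1/5)) * hP5
  have hS6 : w0*w1*w2*w3*w4*w5 = (36864*u^7 + (-425984)*u^8 + 1769472*u^9 + 65536*u^10) := by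
    linear_combination ((1/6)) * (w0*w1*w2*w3*w4 + w0*w1*w2*w3*w5 + w0*w1*w2*w4*w5 + w0*w1*w3*w4*w5 + w0*w2*w3*w4*w5 + w1*w2*w3*w4*w5) * hP1 + ((1/6)) * ((-96)*u) * hS5 + ((-1/6)) * (w0*w1*w2*w3 + w0*w1*w2*w4 + w0*w1*w2*w5 + w0*w1*w3*w4 + w0*w1*w3*w5 + w0*w1*w4*w5 + w0*w2*w3*w4 + w0*w2*w3*w5 + w0*w2*w4*w5 + w0*w3*w4*w5 + w1*w2*w3*w4 + w1*w2*w3*w5 + w1*w2*w4*w5 + w1*w3*w4*w5 + w2*w3*w4*w5) * hP2 + ((-1/6)) * (192*u + 3136*u^2 + 1248*u^3) * hS4 + ((1/6)) * (w0*w1*w2 + w0*w1*w3 + w0*w1*w4 + w0*w1*w5 + w0*w2*w3 + w0*w2*w4 + w0*w2*w5 + w0*w3*w4 + w0*w3*w5 + w0*w4*w5 + w1*w2*w3 + w1*w2*w4 + w1*w2*w5 + w1*w3*w4 + w1*w3*w5 + w1*w4*w5 + w2*w3*w4 + w2*w3*w5 + w2*w4*w5 + w3*w4*w5) * hP3 +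 ((1/6)) * ((-13824)*u^2 + (-113664)*u^3 + (-86016)*u^4) * hS3 + ((-1/6)) * (w0*w1 + w0*w2 + w0*w3 + w0*w4 + w0*w5 + w1*w2 + w1*w3 + w1*w4 + w1*w5 + w2*w3 + w2*w4 + w2*w5 + w3*w4 + w3*w5 + w4*w5) * hP4 + ((-1/6)) * (9216*u^2 + 727040*u^3 + 4295680*u^4 + 4489216*u^5 + 508416*u^6 + (-16384)*u^7) * hS2 + ((1/6)) * (w0 + w1 + w2 + w3 + w4 + w5) * hP5 + ((1/6)) * ((-1105920)*u^3 + (-33914880)*u^4 + (-165216256)*u^5 + (-211517440)*u^6 + (-57016320)*u^7 + 1966080*u^8) * hS1 + ((-1/6)) * hP6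
  have hw0' : w0 = (α 0 - α 1)*(α 0 - α 2)*(α 0 - α 3)*(α 0 - α 4)*(α 0 - α 5) := hw0.trans hq0
  have hw1' : w1 = -((α 0 - α 1)*(α 1 - α 2)*(α 1 - α 3)*(α 1 - α 4)*(α 1 - α 5)) := hw1.trans hq1
  have hw2' : w2 = (α 0 - α 2)*(α 1 - α 2)*(α 2 - α 3)*(α 2 - α 4)*(α 2 - α 5) := hw2.trans hq2
  have hw3' : w3 = -((α 0 - α 3)*(α 1 - α 3)*(α 2 - α 3)*(α 3 - α 4)*(α 3 - α 5)) := hw3.trans hq3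
  have hw4' : w4 = (α 0 - α 4)*(α 1 - α 4)*(α 2 - α 4)*(α 3 - α 4)*(α 4 - α 5) := hw4.trans hq4
  have hw5' : w5 = -((α 0 - α 5)*(α 1 - α 5)*(α 2 - α 5)*(α 3 - α 5)*(α 4 - α 5)) := hw5.trans hq5
  rw [hw0', hw1', hw2', hw3', hw4', hw5'] at hS6
  have hrhs : algebraMap ℚ (AlgebraicClosure ℚ)
      (-4096 * t ^ 7 * (9 - 104 * t + 432 * t ^ 2 + 16 * t ^ 3))
      = (-4096) * u^7 * (9 - 104*u + 432*u^2 + 16*u^3) := by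
    rw [hu, map_mul, map_mul, map_neg, map_ofNat, map_pow, map_add, map_add, map_sub, map_ofNat,
      map_mul, map_ofNat, map_mul, map_pow, map_ofNat, map_mul, map_pow, map_ofNat]
  rw [Fin.prod_univ_six, hrhs,
    show (Finset.univ.filter (fun j => (0:Fin 6) < j)) = {1,2,3,4,5} from rfl,
    show (Finset.univ.filter (fun j => (1:Fin 6) < j)) = {2,3,4,5} from rfl,
    show (Finset.univ.filter (fun j => (2:Fin 6) < j)) = {3,4,5} from rfl,
    show (Finset.univ.filter (fun j => (3:Fin 6) < j)) = {4,5} from rfl,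
    show (Finset.univ.filter (fun j => (4:Fin 6) < j)) = {5} from rfl,
    show (Finset.univ.filter (fun j => (5:Fin 6) < j)) = {} from rfl]
  simp only [Finset.prod_insert (show (1:Fin 6) ∉ ({2,3,4,5}:Finset (Fin 6)) by decide),
    Finset.prod_insert (show (2:Fin 6) ∉ ({3,4,5}:Finset (Fin 6)) by decide),
    Finset.prod_insert (show (3:Fin 6) ∉ ({4,5}:Finset (Fin 6)) by decide),
    Finset.prod_insert (show (4:Fin 6) ∉ ({5}:Finset (Fin 6)) by decide),
    Finset.prod_singleton, Finset.prod_empty, mul_one]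
  obtain ⟨d01, hd01⟩ : ∃ d, α 0 - α 1 = d := ⟨_, rfl⟩
  obtain ⟨d02, hd02⟩ : ∃ d, α 0 - α 2 = d := ⟨_, rfl⟩
  obtain ⟨d03, hd03⟩ : ∃ d, α 0 - α 3 = d := ⟨_, rfl⟩
  obtain ⟨d04, hd04⟩ : ∃ d, α 0 - α 4 = d := ⟨_, rfl⟩
  obtain ⟨d05, hd05⟩ : ∃ d, α 0 - α 5 = d := ⟨_, rfl⟩
  obtain ⟨d12, hd12⟩ : ∃ d, α 1 - α 2 = d := ⟨_, rfl⟩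
  obtain ⟨d13, hd13⟩ : ∃ d, α 1 - α 3 = d := ⟨_, rfl⟩
  obtain ⟨d14, hd14⟩ : ∃ d, α 1 - α 4 = d := ⟨_, rfl⟩
  obtain ⟨d15, hd15⟩ : ∃ d, α 1 - α 5 = d := ⟨_, rfl⟩
  obtain ⟨d23, hd23⟩ : ∃ d, α 2 - α 3 = d := ⟨_, rfl⟩
  obtain ⟨d24, hd24⟩ : ∃ d, α 2 - α 4 = d := ⟨_, rfl⟩
  obtain ⟨d25, hd25⟩ : ∃ d, α 2 - α 5 = d := ⟨_, rfl⟩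
  obtain ⟨d34, hd34⟩ : ∃ d, α 3 - α 4 = d := ⟨_, rfl⟩
  obtain ⟨d35, hd35⟩ : ∃ d, α 3 - α 5 = d := ⟨_, rfl⟩
  obtain ⟨d45, hd45⟩ : ∃ d, α 4 - α 5 = d := ⟨_, rfl⟩
  rw [hd01, hd02, hd03, hd04, hd05, hd12, hd13, hd14, hd15, hd23, hd24, hd25, hd34, hd35, hd45] at hS6 ⊢
  linear_combination -hS6

/-- For Flynn's family `f_t`, the discriminant `∏_{i<j}(α_i - α_j)²` (with `u₀ = 1`)
equals `-4096·t⁷·(9 - 104t + 432t² + 16t³)`; in particular `f_t` is squarefree over `ℚ̄`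
iff `t ≠ 0` and `9 - 104t + 432t² + 16t³ ≠ 0`. -/
theorem flynn_discriminant (t : ℚ) :
    (∀ α : Fin 6 → AlgebraicClosure ℚ,
      (flynn t).map (algebraMap ℚ (AlgebraicClosure ℚ)) = ∏ i, (X - C (α i)) →
      ∏ i : Fin 6, ∏ j ∈ Finset.univ.filter (fun j => i < j), (α i - α j) ^ 2
        = algebraMap ℚ (AlgebraicClosure ℚ)
            (-4096 * t ^ 7 * (9 - 104 * t + 432 * t ^ 2 + 16 * t ^ 3))) ∧
    (Squarefree ((flynn t).map (algebraMap ℚ (AlgebraicClosure ℚ))) ↔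
      (t ≠ 0 ∧ 9 - 104 * t + 432 * t ^ 2 + 16 * t ^ 3 ≠ 0)) := by
  refine ⟨fun α hα => flynn_disc_main t α hα, ?_⟩
  set F := (flynn t).map (algebraMap ℚ (AlgebraicClosure ℚ)) with hF
  have hmonic : F.Monic := by
    apply Polynomial.Monic.map
    unfold flynn; monicity!
  have hsplit : Splits F := IsAlgClosed.splits F
  have hdeg : F.natDegree = 6 := by
    rw [hF, Polynomial.natDegree_map]
    unfold flynn; compute_degree!
  have hcard : Multiset.card F.roots = 6 := by
    rw [Polynomial.splits_iff_card_roots.mp hsplit, hdeg]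
  have hlen : F.roots.toList.length = 6 := by
    rw [Multiset.length_toList, hcard]
  have hco : (F.roots.toList : Multiset (AlgebraicClosure ℚ)) = F.roots := Multiset.coe_toList _
  obtain ⟨b0,b1,b2,b3,b4,b5,hlist⟩ : ∃ b0 b1 b2 b3 b4 b5,
      F.roots.toList = [b0,b1,b2,b3,b4,b5] := by
    rcases h : F.roots.toList with _|⟨x0,_|⟨x1,_|⟨x2,_|⟨x3,_|⟨x4,_|⟨x5,_|⟨x6,l⟩⟩⟩⟩⟩⟩⟩ <;>
      simp [h] at hlen
    exact ⟨x0,x1,x2,x3,x4,x5,rfl⟩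
  set α : Fin 6 → AlgebraicClosure ℚ := ![b0,b1,b2,b3,b4,b5] with hαdef
  have hfact : F = ∏ i, (X - C (α i)) := by
    conv_lhs => rw [hsplit.eq_prod_roots_of_monic hmonic]
    rw [← hco, hlist, Fin.prod_univ_six]
    have e0 : α 0 = b0 := rfl
    have e1 : α 1 = b1 := rfl
    have e2 : α 2 = b2 := rfl
    have e3 : α 3 = b3 := rfl
    have e4 : α 4 = b4 := rfl
    have e5 : α 5 = b5 := rfl
    rw [e0, e1, e2, e3, e4, e5, Multiset.map_coe, Multiset.prod_coe]
    simp only [List.map_cons, List.map_nil, List.prod_cons, List.prod_nil, mul_one]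
    ring
  have hdisc := flynn_disc_main t α hfact
  have hsq : Squarefree F ↔ Function.Injective α := by
    rw [← PerfectField.separable_iff_squarefree, hfact, Polynomial.separable_prod_X_sub_C_iff]
  have hD : (-4096 * t ^ 7 * (9 - 104 * t + 432 * t ^ 2 + 16 * t ^ 3) ≠ 0)
      ↔ (t ≠ 0 ∧ 9 - 104 * t + 432 * t ^ 2 + 16 * t ^ 3 ≠ 0) := by
    constructor
    · intro h
      refine ⟨fun h0 => h ?_, fun h0 => h ?_⟩ <;> rw [h0] <;> ring
    · rintro ⟨h1, h2⟩
      exact mul_ne_zero (mul_ne_zero (by norm_num) (pow_ne_zero _ h1)) h2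
  rw [hsq, ← hD]
  constructor
  · intro hinj hzero
    have : ∏ i : Fin 6, ∏ j ∈ Finset.univ.filter (fun j => i < j), (α i - α j) ^ 2 = 0 := by
      rw [hdisc, hzero, map_zero]
    rw [Finset.prod_eq_zero_iff] at this
    obtain ⟨i, -, hi⟩ := this
    rw [Finset.prod_eq_zero_iff] at hi
    obtain ⟨j, hj, hij⟩ := hi
    rw [Finset.mem_filter] at hj
    have : α i = α j :=
      sub_eq_zero.mp (pow_eq_zero_iff (by norm_num : (2:ℕ) ≠ 0) |>.mp hij)
    exact absurd (hinj this) (ne_of_lt hj.2)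
  · intro hne
    have hprod : ∏ i : Fin 6, ∏ j ∈ Finset.univ.filter (fun j => i < j), (α i - α j) ^ 2 ≠ 0 := by
      rw [hdisc]
      exact fun h => hne ((_root_.map_eq_zero (algebraMap ℚ (AlgebraicClosure ℚ))).mp h)
    intro i j hij
    by_contra hnij
    rcases lt_trichotomy i j with h | h | h
    · apply hprod
      apply Finset.prod_eq_zero (Finset.mem_univ i)
      apply Finset.prod_eq_zero (Finset.mem_filter.mpr ⟨Finset.mem_univ j, h⟩)
      rw [hij]; ring
    · exact hnij h
    · apply hprod
      apply Finset.prod_eq_zero (Finset.mem_univ j)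
      apply Finset.prod_eq_zero (Finset.mem_filter.mpr ⟨Finset.mem_univ i, h⟩)
      rw [hij]; ring
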